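/- Let m ≥ 1 and let d be an integer with 2 ≤ d ≤ q^m. Set a = q - d^{1/m} (a real number), r = ⌊ m·log((q-a)/(q-⌊a⌋)) / log((q-⌊a⌋-1)/(q-⌊a⌋)) ⌋, and s = m⌊a⌋ + r. Then Hyp_q(d,m) ⊆ RM_q(s,m), and s is the smallest integer with this property; that is, Hyp_q(d,m) ⊄ RM_q(s-1,m). -/

import Mathlib

open MvPolynomial Finset Pointwise

lemma lemA (b : ℕ) : ∀ n : ℕ, (b + 1 + n) * b ^ n ≤ (b + 1) ^ (n + 1)
  | 0 => by simp
  | n + 1 => by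
    have h1 : (b + 1 + (n + 1)) * b ≤ (b + 1) * (b + 1 + n) := by nlinarith
    calc (b + 1 + (n + 1)) * b ^ (n + 1) = ((b + 1 + (n + 1)) * b) * b ^ n := by ring
    _ ≤ ((b + 1) * (b + 1 + n)) * b ^ n := Nat.mul_le_mul_right _ h1
    _ = (b + 1) * ((b + 1 + n) * b ^ n) := by ring
    _ ≤ (b + 1) * (b + 1) ^ (n + 1) := Nat.mul_le_mul_left _ (lemA b n)
    _ = (b + 1) ^ (n + 2) := by ring

lemma lemB (b : ℕ) : ∀ n : ℕ, n ≤ b → (b - n) * (b + 1) ^ n ≤ b ^ (n + 1)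
  | 0, _ => by simp
  | n + 1, h => by
    have h1 : (b - (n + 1)) * (b + 1) ≤ b * (b - n) := by
      rcases Nat.exists_eq_add_of_le h with ⟨e, he⟩
      have hb : b = n + 1 + e := he
      subst hb
      have e1 : n + 1 + e - (n + 1) = e := by omega
      have e2 : n + 1 + e - n = e + 1 := by omega
      rw [e1, e2]
      nlinarith
    calc (b - (n + 1)) * (b + 1) ^ (n + 1) = ((b - (n + 1)) * (b + 1)) * (b + 1) ^ n := by ring
    _ ≤ (b * (b - n)) * (b + 1) ^ n := Nat.mul_le_mul_right _ h1
    _ = b * ((b - n) * (b + 1) ^ n) := by ring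
    _ ≤ b * b ^ (n + 1) := Nat.mul_le_mul_left _ (lemB b n (by omega))
    _ = b ^ (n + 2) := by ring

lemma chord (b : ℕ) (hb : 1 ≤ b) (k : ℕ) (hk : 1 ≤ k) :
    Real.log k ≤ Real.log b + ((k : ℝ) - b) * (Real.log (b + 1) - Real.log b) := by
  have hb0 : (0:ℝ) < b := by exact_mod_cast hb
  have hb1 : (0:ℝ) < (b:ℝ) + 1 := by linarith
  rcases Nat.lt_or_ge k (b + 1) with hkb | hkb
  · -- k ≤ b
    obtain ⟨n, hn⟩ : ∃ n, b = k + n := Nat.exists_eq_add_of_le (by omega)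
    have key : (k : ℝ) * ((b:ℝ) + 1) ^ n ≤ (b:ℝ) ^ (n + 1) := by
      have := lemB b n (by omega)
      have hbn : b - n = k := by omega
      rw [hbn] at this
      exact_mod_cast this
    have hlog : Real.log ((k : ℝ) * ((b:ℝ) + 1) ^ n) ≤ Real.log ((b:ℝ) ^ (n + 1)) :=
      Real.log_le_log (by positivity) key
    rw [Real.log_mul (by positivity) (by positivity), Real.log_pow, Real.log_pow] at hlog
    have hkr : (k : ℝ) - b = -(n : ℝ) := by
      have : (b : ℝ) = k + n := by exact_mod_cast hn
      linarith
    rw [hkr]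
    push_cast at hlog ⊢
    nlinarith [hlog]
  · -- k ≥ b + 1
    obtain ⟨n, hn⟩ : ∃ n, k = b + 1 + n := Nat.exists_eq_add_of_le hkb
    have key : (k : ℝ) * (b:ℝ) ^ n ≤ ((b:ℝ) + 1) ^ (n + 1) := by
      have := lemA b n
      rw [← hn] at this
      exact_mod_cast this
    have hlog : Real.log ((k : ℝ) * (b:ℝ) ^ n) ≤ Real.log (((b:ℝ) + 1) ^ (n + 1)) :=
      Real.log_le_log (by positivity) key
    rw [Real.log_mul (by positivity) (by positivity), Real.log_pow, Real.log_pow] at hlog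
    have hkr : (k : ℝ) - b = (n : ℝ) + 1 := by
      have : (k : ℝ) = b + 1 + n := by exact_mod_cast hn
      linarith
    rw [hkr]
    push_cast at hlog ⊢
    nlinarith [hlog]


noncomputable section

/-- Evaluation of a multivariate polynomial at all points of `F^m`. -/
def evalPt {F : Type} [Field F] {m : ℕ} (f : MvPolynomial (Fin m) F) : (Fin m → F) → F :=
  fun P => MvPolynomial.eval P f

/-- The monomial code `C_A = ev(F_q[A])`, the evaluations of the polynomials
whose monomial support is contained in `A`. -/
def monomialCode (F : Type) [Field F] (m : ℕ) (A : Set (Fin m →₀ ℕ)) :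
    Set ((Fin m → F) → F) :=
  { v | ∃ f : MvPolynomial (Fin m) F, (↑f.support : Set (Fin m →₀ ℕ)) ⊆ A ∧ v = evalPt f }

/-- Exponent set of the Reed–Muller code `RM_q(s,m)` (empty when `s < 0`). -/
def RMset (q m : ℕ) (s : ℤ) : Set (Fin m →₀ ℕ) :=
  { i | (∀ j, i j < q) ∧ (∑ j, (i j : ℤ)) ≤ s }

/-- Exponent set of the hyperbolic code `Hyp_q(d,m)`. -/
def Hypset (q m d : ℕ) : Set (Fin m →₀ ℕ) :=
  { i | (∀ j, i j < q) ∧ d ≤ ∏ j, (q - i j) }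

/-- Exponent set of the cube code `Cube_q(s,m)`. -/
def Cubeset (m s : ℕ) : Set (Fin m →₀ ℕ) :=
  { i | ∀ j, i j ≤ s }

/-- Minimum distance of a code: least Hamming weight of a nonzero codeword. -/
def minDist {F : Type} [Field F] [Fintype F] [DecidableEq F] {m : ℕ}
    (C : Set ((Fin m → F) → F)) : ℕ :=
  sInf { w | ∃ v ∈ C, v ≠ 0 ∧ hammingNorm v = w }

/-- Hamming distance from a word to a code. -/
def distToCode {F : Type} [Field F] [Fintype F] [DecidableEq F] {m : ℕ}
    (y : (Fin m → F) → F) (C : Set ((Fin m → F) → F)) : ℕ :=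
  sInf { w | ∃ c ∈ C, hammingDist y c = w }

/-- `i`-fold Minkowski sum of `H` with itself (`0`-fold sum is `{0}`). -/
def iMink {m : ℕ} (H : Set (Fin m →₀ ℕ)) : ℕ → Set (Fin m →₀ ℕ)
  | 0 => {0}
  | i + 1 => iMink H i + H

/-- The sets `L(d,r,i)` from the Geil–Matsumoto list-decoding algorithm. -/
def Lset (q m d r i : ℕ) : Set (Fin m →₀ ℕ) :=
  { a | (∀ j, a j < q) ∧ ∀ x ∈ iMink (Hypset q m d) i, a + x ∈ Hypset q m (r + 1) }

set_option maxHeartbeats 1600000 in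
/-- with `a = q - d^{1/m}`,
`r = ⌊ m·log((q-a)/(q-⌊a⌋)) / log((q-⌊a⌋-1)/(q-⌊a⌋)) ⌋` and `s = m⌊a⌋ + r`,
`Hyp_q(d,m) ⊆ RM_q(s,m)` and `s` is the smallest integer with this property. -/
theorem statement6 (F : Type) [Field F] [Fintype F] [DecidableEq F]
    (q m d : ℕ) (hq : Fintype.card F = q) (hm : 1 ≤ m) (hd1 : 2 ≤ d) (hd2 : d ≤ q ^ m)
    (a : ℝ) (ha : a = (q : ℝ) - (d : ℝ) ^ ((1 : ℝ) / m))
    (r : ℤ) (hr : r = ⌊(m : ℝ) * Real.log (((q : ℝ) - a) / ((q : ℝ) - (⌊a⌋ : ℝ))) /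
        Real.log (((q : ℝ) - (⌊a⌋ : ℝ) - 1) / ((q : ℝ) - (⌊a⌋ : ℝ)))⌋)
    (s : ℤ) (hs : s = (m : ℤ) * ⌊a⌋ + r) :
    monomialCode F m (Hypset q m d) ⊆ monomialCode F m (RMset q m s) ∧
      ¬ monomialCode F m (Hypset q m d) ⊆ monomialCode F m (RMset q m (s - 1)) := by
  have hq2 : 2 ≤ q := by
    rcases Nat.lt_or_ge q 2 with h | h
    · exfalso
      have h1 : q ^ m ≤ 1 ^ m := Nat.pow_le_pow_left (by omega) m
      rw [one_pow] at h1
      omega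
    · exact h
  have hm0 : (0:ℝ) < m := by exact_mod_cast hm
  have hd0 : (0:ℝ) < d := by positivity
  set t : ℝ := (d : ℝ) ^ ((1 : ℝ) / m) with htdef
  have ht0 : 0 < t := Real.rpow_pos_of_pos hd0 _
  have ht1 : 1 < t := by
    rw [htdef, Real.one_lt_rpow_iff_of_pos hd0]
    exact Or.inl ⟨by exact_mod_cast hd1, by positivity⟩
  have htq : t ≤ q := by
    rw [htdef]
    calc (d:ℝ) ^ ((1:ℝ)/m) ≤ ((q:ℝ) ^ m) ^ ((1:ℝ)/m) := by
          apply Real.rpow_le_rpow (le_of_lt hd0) (by exact_mod_cast hd2) (by positivity)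
    _ = (q:ℝ) := by
          rw [← Real.rpow_natCast (q:ℝ) m, ← Real.rpow_mul (by positivity)]
          rw [mul_one_div, div_self (by positivity), Real.rpow_one]
  have hlogt : (m:ℝ) * Real.log t = Real.log d := by
    rw [htdef, Real.log_rpow hd0]; field_simp
  have ha' : a = (q:ℝ) - t := ha
  have hfl : (⌊a⌋ : ℝ) ≤ a := Int.floor_le a
  have hfl2 : a < (⌊a⌋ : ℝ) + 1 := Int.lt_floor_add_one a
  have ha0 : 0 ≤ a := by rw [ha']; linarith
  have hfl0 : 0 ≤ ⌊a⌋ := Int.floor_nonneg.mpr ha0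
  have hflq : ⌊a⌋ < (q:ℤ) := by
    have h9 : (⌊a⌋:ℝ) < q := by linarith
    exact_mod_cast h9
  set c : ℕ := q - ⌊a⌋.toNat with hcdef
  have hcZ : (c:ℤ) = (q:ℤ) - ⌊a⌋ := by omega
  have hcR : (c:ℝ) = (q:ℝ) - (⌊a⌋:ℝ) := by exact_mod_cast hcZ
  have htc : t ≤ (c:ℝ) := by
    have h9 : (⌊a⌋:ℝ) ≤ (q:ℝ) - t := by rw [← ha']; exact hfl
    rw [hcR]; linarith
  have hct : (c:ℝ) - 1 < t := by
    have h9 : (q:ℝ) - t < (⌊a⌋:ℝ) + 1 := by rw [← ha']; exact hfl2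
    rw [hcR]; linarith
  have hc2 : 2 ≤ c := by
    have h9 : (1:ℝ) < (c:ℝ) := by linarith
    have h8 : 1 < c := by exact_mod_cast h9
    omega
  have hcq : c ≤ q := by omega
  set b : ℕ := c - 1 with hbdef
  have hbR : (b:ℝ) = (c:ℝ) - 1 := by
    have : 1 ≤ c := by omega
    push_cast [hbdef, Nat.cast_sub this]; ring
  have hb1 : 1 ≤ b := by omega
  have hb0 : (0:ℝ) < b := by exact_mod_cast hb1
  have hc0 : (0:ℝ) < c := by positivity
  have halpha : Real.log b < Real.log c := Real.log_lt_log hb0 (by rw [hbR]; linarith)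
  have hrr : r = ⌊(m : ℝ) * Real.log (t / c) / Real.log ((b:ℝ) / c)⌋ := by
    rw [hr]
    congr 2
    · rw [show (q:ℝ) - a = t by rw [ha']; ring, hcR]
    · rw [hcR.symm, ← hbR]
  set N : ℝ := (m:ℝ) * Real.log (t / c) with hNdef
  set D : ℝ := Real.log ((b:ℝ) / c) with hDdef
  have hD : D = Real.log b - Real.log c := Real.log_div (by positivity) (by positivity)
  have hDneg : D < 0 := by rw [hD]; linarith
  have hN : N = Real.log d - (m:ℝ) * Real.log c := by
    rw [hNdef, Real.log_div (by positivity) (by positivity)]; linarith [hlogt]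
  have hfloor1 : (r : ℝ) ≤ N / D := by rw [hrr]; exact Int.floor_le _
  have hfloor2 : N / D < (r:ℝ) + 1 := by
    rw [hrr]; push_cast; exact Int.lt_floor_add_one _
  have h_up : Real.log d ≤ ((m:ℝ) - r) * Real.log c + (r:ℝ) * Real.log b := by
    have h9 := (le_div_iff_of_neg hDneg).mp hfloor1
    rw [hN, hD] at h9
    ring_nf at h9 ⊢
    linarith [h9]
  have h_low : ((m:ℝ) - (r:ℝ) - 1) * Real.log c + ((r:ℝ) + 1) * Real.log b < Real.log d := by
    have h9 := (div_lt_iff_of_neg hDneg).mp hfloor2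
    rw [hN, hD] at h9
    ring_nf at h9 ⊢
    linarith [h9]
  have hr0 : 0 ≤ r := by
    rw [hrr]
    apply Int.floor_nonneg.mpr
    rw [le_div_iff_of_neg hDneg]
    have h9 : Real.log (t / c) ≤ 0 := Real.log_nonpos (by positivity)
      (by rw [div_le_one hc0]; exact htc)
    nlinarith [h9]
  have hrm : r < m := by
    have hbt : (b:ℝ) < t := by rw [hbR]; linarith
    have h9 : Real.log ((b:ℝ)/c) < Real.log (t/c) := by
      apply Real.log_lt_log (by positivity)
      gcongr
    rw [hrr, Int.floor_lt]
    push_cast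
    rw [div_lt_iff_of_neg hDneg]
    exact mul_lt_mul_of_pos_left h9 hm0
  set r' : ℕ := r.toNat with hr'def
  have hr'Z : ((r':ℕ) : ℤ) = r := Int.toNat_of_nonneg hr0
  have hr'm : r' < m := by omega
  have hr'R : ((r':ℕ) : ℝ) = (r:ℝ) := by exact_mod_cast hr'Z
  -- upper bridge : d ≤ c^(m-r') * b^(r')
  have hprod : d ≤ c ^ (m - r') * b ^ r' := by
    have hlog9 : Real.log d ≤ Real.log ((c:ℝ)^(m - r') * (b:ℝ)^(r')) := by
      rw [Real.log_mul (by positivity) (by positivity), Real.log_pow, Real.log_pow]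
      have hmr : ((m - r' : ℕ) : ℝ) = (m:ℝ) - (r:ℝ) := by
        rw [Nat.cast_sub (le_of_lt hr'm), hr'R]
      rw [hmr, hr'R]
      exact h_up
    have h9 : (d:ℝ) ≤ (c:ℝ)^(m - r') * (b:ℝ)^(r') := by
      rwa [Real.log_le_log_iff hd0 (by positivity)] at hlog9
    exact_mod_cast h9
  -- lower bridge
  have hlower : ∀ k : Fin m → ℕ, (∀ j, 1 ≤ k j) → (d:ℝ) ≤ ∏ j, (k j:ℝ) →
      (m:ℤ) * c - r ≤ ∑ j, (k j : ℤ) := by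
    intro k hk1 hkd
    have hlogd : Real.log d ≤ ∑ j, Real.log (k j) := by
      rw [← Real.log_prod (fun j _ => by have := hk1 j; positivity)]
      exact Real.log_le_log hd0 hkd
    have hbc : ((b:ℝ) + 1) = (c:ℝ) := by rw [hbR]; ring
    set S : ℝ := ∑ j, (k j : ℝ) with hSdef
    have hsum : ∑ j, Real.log (k j) ≤
        (m:ℝ) * Real.log b + (S - m * b) * (Real.log c - Real.log b) := by
      calc ∑ j, Real.log (k j)
          ≤ ∑ j, (Real.log b + ((k j:ℝ) - b) * (Real.log c - Real.log b)) := by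
            apply Finset.sum_le_sum; intro j _
            rw [← hbc]; exact chord b hb1 (k j) (hk1 j)
      _ = (m:ℝ) * Real.log b + (S - m * b) * (Real.log c - Real.log b) := by
            rw [Finset.sum_add_distrib, Finset.sum_const, Finset.card_univ, Fintype.card_fin,
              ← Finset.sum_mul, Finset.sum_sub_distrib, Finset.sum_const, Finset.card_univ,
              Fintype.card_fin, hSdef]
            push_cast; ring
    have h1 : ((m:ℝ) - r - 1) * Real.log c + ((r:ℝ)+1) * Real.log b <
        (m:ℝ) * Real.log b + (S - m*b) * (Real.log c - Real.log b) :=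
      lt_of_lt_of_le h_low (hlogd.trans hsum)
    have h2 : ((m:ℝ) - r - 1) * (Real.log c - Real.log b) <
        (S - m*b) * (Real.log c - Real.log b) := by ring_nf at h1 ⊢; linarith
    have h3 : (m:ℝ) - r - 1 < S - m*b := by
      have halpha2 : (0:ℝ) < Real.log c - Real.log b := by linarith
      exact (mul_lt_mul_iff_of_pos_right halpha2).mp h2
    have h5 : (m:ℝ)*b = m*c - m := by rw [hbR]; ring
    have h4 : (m:ℝ)*c - r - 1 < S := by linarith
    have h6 : ((∑ j, (k j:ℤ)):ℝ) = S := by rw [hSdef]; push_cast; rfl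
    have h7 : ((m:ℤ):ℝ)*((c:ℕ):ℝ) - (r:ℝ) - 1 < ((∑ j, (k j:ℤ)):ℝ) := by
      rw [h6]; exact_mod_cast h4
    have h8 : (m:ℤ)*(c:ℤ) - r - 1 < ∑ j, (k j:ℤ) := by exact_mod_cast h7
    omega

  -- q ≥ 2
  -- (hq2 derived above)
  -- r' and helpers already defined
  set r'' := r'  -- noop
  -- ===== existence exponent i0 =====
  set g : Fin m → ℕ := fun j => if (j:ℕ) < r' then q - c + 1 else q - c with hgdef
  set i0 : Fin m →₀ ℕ := Finsupp.equivFunOnFinite.symm g with hi0def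
  have hi0app : ∀ j, i0 j = g j := fun j => rfl
  have hfilter : (Finset.univ.filter (fun j : Fin m => (j:ℕ) < r')) = Finset.Iio (⟨r', hr'm⟩ : Fin m) := by
    ext j
    simp [Fin.lt_def]
  have hcard : (Finset.univ.filter (fun j : Fin m => (j:ℕ) < r')).card = r' := by
    rw [hfilter, Fin.card_Iio]
  have hcard2 : (Finset.univ.filter (fun j : Fin m => ¬ ((j:ℕ) < r'))).card = m - r' := by
    have := Finset.card_filter_add_card_filter_not
      (s := (Finset.univ : Finset (Fin m))) (p := fun j : Fin m => (j:ℕ) < r')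
    rw [Finset.card_univ, Fintype.card_fin] at this
    omega
  have hsub1 : q - (q - c + 1) = b := by omega
  have hsub2 : q - (q - c) = c := by omega
  have hprodval : ∏ j, (q - i0 j) = b ^ r' * c ^ (m - r') := by
    have : ∀ j, q - i0 j = if (j:ℕ) < r' then b else c := by
      intro j
      rw [hi0app, hgdef]
      by_cases h : (j:ℕ) < r' <;> simp [h, hsub1, hsub2]
    rw [Finset.prod_congr rfl (fun j _ => this j), Finset.prod_ite, Finset.prod_const,
      Finset.prod_const, hcard, hcard2]
  have hsumval : ∑ j, i0 j = r' * (q - c + 1) + (m - r') * (q - c) := by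
    have : ∀ j, i0 j = if (j:ℕ) < r' then q - c + 1 else q - c := fun j => hi0app j
    rw [Finset.sum_congr rfl (fun j _ => this j), Finset.sum_ite, Finset.sum_const,
      Finset.sum_const, hcard, hcard2, smul_eq_mul, smul_eq_mul]
  have hi0Hyp : i0 ∈ Hypset q m d := by
    constructor
    · intro j
      rw [hi0app, hgdef]
      by_cases h : (j:ℕ) < r' <;> simp [h] <;> omega
    · rw [hprodval]
      calc d ≤ c ^ (m - r') * b ^ r' := hprod
      _ = b ^ r' * c ^ (m - r') := mul_comm _ _
  have hseq : (s:ℤ) = (m:ℤ) * ((q:ℤ) - c) + r := by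
    rw [hs]
    have hfloora : (⌊a⌋:ℤ) = (q:ℤ) - c := by omega
    rw [hfloora]
  have hsumZ : ∑ j, (i0 j : ℤ) = s := by
    have h1 : ((∑ j, i0 j : ℕ) : ℤ) = ∑ j, (i0 j : ℤ) := by push_cast; rfl
    rw [← h1, hsumval, hseq, ← hr'Z]
    have e1 : q - c + 1 = q - c + 1 := rfl
    push_cast [Nat.cast_sub hcq, Nat.cast_sub (show r' ≤ m from le_of_lt hr'm)]
    rw [show ((r'':ℕ):ℤ) = ((r':ℕ):ℤ) from rfl]
    ring
  -- ===== Part 1 : Hypset ⊆ RMset s =====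
  have hHypRM : Hypset q m d ⊆ RMset q m s := by
    intro i hi
    obtain ⟨hiq, hid⟩ := hi
    refine ⟨hiq, ?_⟩
    have hk1 : ∀ j, 1 ≤ q - i j := fun j => by have := hiq j; omega
    have hkd : (d:ℝ) ≤ ∏ j, ((q - i j : ℕ):ℝ) := by
      rw [← Nat.cast_prod]; exact_mod_cast hid
    have hlow2 := hlower (fun j => q - i j) hk1 hkd
    have hsplit : ∑ j, ((i j : ℤ)) + ∑ j, ((q - i j : ℕ) : ℤ) = (m:ℤ) * q := by
      rw [← Finset.sum_add_distrib]
      have he : ∀ j, (i j : ℤ) + ((q - i j : ℕ):ℤ) = (q:ℤ) := fun j => by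
        have := hiq j; omega
      rw [Finset.sum_congr rfl (fun j _ => he j), Finset.sum_const, Finset.card_univ,
        Fintype.card_fin, nsmul_eq_mul]
    rw [hseq]
    have hexp : (m:ℤ) * ((q:ℤ) - c) + r = (m:ℤ)*q - (m:ℤ)*c + r := by ring
    rw [hexp]
    linarith [hlow2, hsplit]
  constructor
  · rintro v ⟨f, hsupp, rfl⟩
    exact ⟨f, fun x hx => hHypRM (hsupp hx), rfl⟩
  · intro hsub
    have hv : evalPt (monomial i0 (1:F)) ∈ monomialCode F m (Hypset q m d) := by
      refine ⟨monomial i0 1, ?_, rfl⟩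
      rw [MvPolynomial.support_monomial, if_neg (one_ne_zero)]
      intro x hx
      simp only [Finset.coe_singleton, Set.mem_singleton_iff] at hx
      rw [hx]; exact hi0Hyp
    obtain ⟨f, hfs, hfe⟩ := hsub hv
    have hz : f - monomial i0 1 = 0 := by
      apply MvPolynomial.eq_zero_of_eval_eq_zero
      · intro P
        have hP := congrFun hfe P
        simp only [evalPt] at hP
        rw [map_sub, ← hP, sub_self]
      · rw [MvPolynomial.mem_restrictDegree]
        intro sExp hsExp j
        rw [hq]
        have hmem := MvPolynomial.support_sub (Fin m) f (monomial i0 1) hsExp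
        rw [Finset.mem_union] at hmem
        rcases hmem with h | h
        · have := (hfs h).1 j
          omega
        · rw [MvPolynomial.support_monomial, if_neg one_ne_zero, Finset.mem_singleton] at h
          subst h
          have h2 := hi0Hyp.1 j
          omega
    have hf : f = monomial i0 1 := by rwa [sub_eq_zero] at hz
    have hi0supp : i0 ∈ f.support := by
      rw [hf, MvPolynomial.support_monomial, if_neg one_ne_zero, Finset.mem_singleton]
    have := (hfs hi0supp).2
    rw [hsumZ] at this
    omega
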